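/- arXiv:2312.17153 — 8 statements merged into one kernel-verified Lean document; each statement's English description precedes it below -/
import Mathlib

section
/- For m ≥ 1 and n ≥ 1, the row sum of the m-th order Eulerian triangle equals the product Σ_{k=0}^{n-1} T^(m)_{n,k} = ∏_{j=0}^{n-1} (jm + 1) = 1·(m+1)·(2m+1)···((n-1)m+1). -/
/-- The `m`th-order Eulerian numbers `T^(m)_{n,k}`, with integer descent index `k`
(so `T^(m)_{n,k} = 0` for `k < 0` or `k ≥ n`). -/
def eulerianT (m : ℕ) : ℕ → ℤ → ℤ
  | 0, _ => 0
  | 1, k => if k = 0 then 1 else 0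
  | n + 2, k =>
      if k < 0 ∨ (n : ℤ) + 2 ≤ k then 0
      else (k + 1) * eulerianT m (n + 1) k +
        ((m : ℤ) * ((n : ℤ) + 2) - k - (m : ℤ) + 1) * eulerianT m (n + 1) (k - 1)

lemma eulerianT_neg (m n : ℕ) (k : ℤ) (hk : k < 0) : eulerianT m n k = 0 := by
  match n with
  | 0 => rfl
  | 1 => simp [eulerianT]; omega
  | n + 2 => rw [eulerianT, if_pos (Or.inl hk)]

lemma eulerianT_ge (m n : ℕ) (k : ℤ) (hk : (n : ℤ) ≤ k) : eulerianT m n k = 0 := by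
  match n with
  | 0 => rfl
  | 1 => simp [eulerianT]; omega
  | n + 2 =>
    rw [eulerianT, if_pos (Or.inr (by push_cast at hk ⊢; omega))]

lemma rowSum_step (m n : ℕ) :
    ∑ k ∈ Finset.range (n + 2), eulerianT m (n + 2) (k : ℤ) =
      ((m : ℤ) * ((n : ℤ) + 1) + 1) *
        ∑ k ∈ Finset.range (n + 1), eulerianT m (n + 1) (k : ℤ) := by
  have hunf : ∀ k ∈ Finset.range (n + 2),
      eulerianT m (n + 2) (k : ℤ) =
        ((k : ℤ) + 1) * eulerianT m (n + 1) (k : ℤ) +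
          ((m : ℤ) * ((n : ℤ) + 2) - (k : ℤ) - (m : ℤ) + 1) *
            eulerianT m (n + 1) ((k : ℤ) - 1) := by
    intro k hk
    rw [Finset.mem_range] at hk
    rw [eulerianT, if_neg (by push_cast; omega)]
  rw [Finset.sum_congr rfl hunf, Finset.sum_add_distrib]
  have hA : ∑ k ∈ Finset.range (n + 2), ((k : ℤ) + 1) * eulerianT m (n + 1) (k : ℤ) =
      ∑ k ∈ Finset.range (n + 1), ((k : ℤ) + 1) * eulerianT m (n + 1) (k : ℤ) := by
    rw [Finset.sum_range_succ, eulerianT_ge m (n + 1) _ (by omega), mul_zero,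
      add_zero]
  have hB : ∑ k ∈ Finset.range (n + 2),
      ((m : ℤ) * ((n : ℤ) + 2) - (k : ℤ) - (m : ℤ) + 1) * eulerianT m (n + 1) ((k : ℤ) - 1) =
      ∑ k ∈ Finset.range (n + 1),
        ((m : ℤ) * ((n : ℤ) + 2) - ((k : ℤ) + 1) - (m : ℤ) + 1) *
          eulerianT m (n + 1) (k : ℤ) := by
    rw [Finset.sum_range_succ'
      (f := fun k => ((m : ℤ) * ((n : ℤ) + 2) - (k : ℤ) - (m : ℤ) + 1) *
        eulerianT m (n + 1) ((k : ℤ) - 1))]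
    rw [eulerianT_neg m (n + 1) _ (by norm_num), mul_zero, add_zero]
    apply Finset.sum_congr rfl
    intro k _
    have h : ((k + 1 : ℕ) : ℤ) - 1 = (k : ℤ) := by push_cast; ring
    rw [h]
    push_cast
    ring
  rw [hA, hB, ← Finset.sum_add_distrib, Finset.mul_sum]
  apply Finset.sum_congr rfl
  intro k _
  ring

theorem rowSum_eq_prod (m n : ℕ) (hm : 1 ≤ m) (hn : 1 ≤ n) :
    ∑ k ∈ Finset.range n, eulerianT m n (k : ℤ) =
      ∏ j ∈ Finset.range n, ((j : ℤ) * (m : ℤ) + 1) := by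
  induction n with
  | zero => omega
  | succ n ih =>
    match n, ih with
    | 0, _ => simp [eulerianT]
    | n + 1, ih =>
      rw [rowSum_step, Finset.prod_range_succ, ih (by omega)]
      push_cast
      ring
end

section
/- For m ≥ 1 and n ≥ 1, the m-th order Eulerian fraction F_{m;n}(t) = S_{m;n}(t)/(1-t)^{m(n-1)+2} satisfies d/dt [ t/(1-t)^{m-1} · F_{m;n}(t) ] = F_{m;n+1}(t) for t ≠ 1. -/
/-- The `m`th-order Eulerian polynomial `S_{m;n}(t)`. -/
noncomputable def S (m n : ℕ) (t : ℝ) : ℝ :=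
  ∑ k ∈ Finset.range n, (eulerianT m n (k : ℤ) : ℝ) * t ^ k

/-- The `m`th-order Eulerian fraction. -/
noncomputable def F (m n : ℕ) (t : ℝ) : ℝ := S m n t / (1 - t) ^ (m * (n - 1) + 2)

lemma eulerianT_eq_zero (m n : ℕ) (k : ℤ) (h : k < 0 ∨ (n : ℤ) ≤ k) :
    eulerianT m n k = 0 := by
  match n with
  | 0 => rfl
  | 1 =>
    have : k ≠ 0 := by omega
    simp [eulerianT, this]
  | n + 2 =>
    rw [eulerianT, if_pos]
    push_cast at h
    omega

lemma eulerianT_succ (m n : ℕ) (hn : 1 ≤ n) (k : ℕ) :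
    eulerianT m (n + 1) (k : ℤ) =
      ((k : ℤ) + 1) * eulerianT m n (k : ℤ) +
        ((m : ℤ) * n - k + 1) * eulerianT m n ((k : ℤ) - 1) := by
  obtain ⟨n', rfl⟩ : ∃ n', n = n' + 1 := ⟨n - 1, by omega⟩
  rw [show n' + 1 + 1 = n' + 2 from rfl, eulerianT]
  by_cases hk : (n' : ℤ) + 2 ≤ (k : ℤ)
  · rw [if_pos (Or.inr hk)]
    rw [eulerianT_eq_zero m _ _ (by push_cast; omega),
      eulerianT_eq_zero m _ _ (by push_cast; omega)]
    ring
  · rw [if_neg (by push_cast; omega)]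
    have h1 : (m : ℤ) * ((n' : ℤ) + 2) - (k : ℤ) - (m : ℤ) + 1
        = (m : ℤ) * ((n' + 1 : ℕ) : ℤ) - (k : ℤ) + 1 := by push_cast; ring
    rw [h1]

lemma hasDerivAt_S (m n : ℕ) (t : ℝ) :
    HasDerivAt (fun s => S m n s)
      (∑ k ∈ Finset.range n, (eulerianT m n (k : ℤ) : ℝ) * (k * t ^ (k - 1))) t := by
  unfold S
  apply HasDerivAt.fun_sum
  intro k _
  exact (hasDerivAt_pow k t).const_mul _

lemma S_rec (m n : ℕ) (hn : 1 ≤ n) (t : ℝ) :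
    S m (n + 1) t = (1 + (m : ℝ) * n * t) * S m n t +
      t * (1 - t) * ∑ k ∈ Finset.range n, (eulerianT m n (k : ℤ) : ℝ) * (k * t ^ (k - 1)) := by
  have key : S m (n + 1) t = ∑ k ∈ Finset.range n,
      (((k : ℝ) + 1) * (eulerianT m n (k : ℤ) : ℝ) * t ^ k +
        ((m : ℝ) * n - k) * (eulerianT m n (k : ℤ) : ℝ) * t ^ (k + 1)) := by
    have h0 : ∀ k ∈ Finset.range (n + 1),
        (eulerianT m (n + 1) (k : ℤ) : ℝ) * t ^ k =
          ((k : ℝ) + 1) * (eulerianT m n (k : ℤ) : ℝ) * t ^ k +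
            ((m : ℝ) * n - k + 1) * (eulerianT m n ((k : ℤ) - 1) : ℝ) * t ^ k := by
      intro k _
      rw [eulerianT_succ m n hn k]
      push_cast
      ring
    have e1 : ∑ x ∈ Finset.range (n + 1),
        ((x : ℝ) + 1) * (eulerianT m n (x : ℤ) : ℝ) * t ^ x
        = ∑ x ∈ Finset.range n, ((x : ℝ) + 1) * (eulerianT m n (x : ℤ) : ℝ) * t ^ x := by
      rw [Finset.sum_range_succ, eulerianT_eq_zero m n n (Or.inr le_rfl)]
      simp
    have e2 : ∑ x ∈ Finset.range (n + 1),
        ((m : ℝ) * n - x + 1) * (eulerianT m n ((x : ℤ) - 1) : ℝ) * t ^ x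
        = ∑ x ∈ Finset.range n,
          ((m : ℝ) * n - x) * (eulerianT m n (x : ℤ) : ℝ) * t ^ (x + 1) := by
      rw [Finset.sum_range_succ']
      rw [show ((0 : ℕ) : ℤ) - 1 = -1 by simp,
        eulerianT_eq_zero m n (-1) (Or.inl (by omega))]
      simp only [Nat.cast_zero, Int.cast_zero, mul_zero, zero_mul, add_zero, pow_zero, mul_one]
      apply Finset.sum_congr rfl
      intro k _
      have hk1 : ((k : ℤ) + 1 - 1) = (k : ℤ) := by ring
      push_cast [hk1]
      ring
    unfold S
    rw [Finset.sum_congr rfl h0, Finset.sum_add_distrib, e1, e2, ← Finset.sum_add_distrib]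
  rw [key]
  unfold S
  rw [Finset.mul_sum, Finset.mul_sum, ← Finset.sum_add_distrib]
  apply Finset.sum_congr rfl
  intro k _
  cases k with
  | zero => simp; ring
  | succ j =>
    simp only [Nat.add_sub_cancel]
    push_cast
    ring

theorem deriv_F (m n : ℕ) (hm : 1 ≤ m) (hn : 1 ≤ n) (t : ℝ) (ht : t ≠ 1) :
    deriv (fun s : ℝ => s / (1 - s) ^ (m - 1) * F m n s) t = F m (n + 1) t := by
  obtain ⟨n', rfl⟩ : ∃ n', n = n' + 1 := ⟨n - 1, by omega⟩
  have h1t : (1 : ℝ) - t ≠ 0 := sub_ne_zero.mpr (Ne.symm ht)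
  have hexp : ∀ s : ℝ, (1 - s) ^ (m - 1) * (1 - s) ^ (m * (n' + 1 - 1) + 2)
      = (1 - s) ^ (m * (n' + 1) + 1) := by
    intro s
    rw [← pow_add]
    congr 1
    have h2 : m * (n' + 1) = m * n' + m := by ring
    simp only [Nat.add_sub_cancel]
    omega
  have hfun : (fun s : ℝ => s / (1 - s) ^ (m - 1) * F m (n' + 1) s)
      = fun s => s * S m (n' + 1) s / (1 - s) ^ (m * (n' + 1) + 1) := by
    funext s
    unfold F
    rw [div_mul_div_comm, hexp]
  rw [hfun]
  have hS := hasDerivAt_S m (n' + 1) t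
  set D := ∑ k ∈ Finset.range (n' + 1), (eulerianT m (n' + 1) (k : ℤ) : ℝ) * (k * t ^ (k - 1))
    with hD
  have hnum : HasDerivAt (fun s : ℝ => s * S m (n' + 1) s) (1 * S m (n' + 1) t + t * D) t :=
    (hasDerivAt_id t).mul hS
  have hden : HasDerivAt (fun s : ℝ => (1 - s) ^ (m * (n' + 1) + 1))
      ((↑(m * (n' + 1) + 1) * (1 - t) ^ (m * (n' + 1) + 1 - 1)) * -1) t :=
    ((hasDerivAt_id t).const_sub 1).pow _
  have hdiv := hnum.fun_div hden (pow_ne_zero _ h1t)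
  rw [hdiv.deriv]
  have hF : F m (n' + 1 + 1) t = S m (n' + 1 + 1) t / (1 - t) ^ (m * (n' + 1) + 2) := by
    unfold F
    simp only [Nat.add_sub_cancel]
  rw [hF, S_rec m (n' + 1) hn t, ← hD]
  simp only [Nat.add_sub_cancel]
  field_simp
  push_cast
  ring
end

section
/- For n ≥ 1 and ℓ ≥ 1, the Stirling number of the second kind satisfies S(n+ℓ, ℓ) = Σ_{k=0}^{ℓ-1} T^(2)_{n,k} · C(2n + ℓ - k - 1, 2n), where T^(2)_{n,k} are the second-order Eulerian numbers. -/
/-- Stirling numbers of the second kind `S(n,k)`: the number of partitions of an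
`n`-set into `k` nonempty blocks. -/
def stirlingSecond : ℕ → ℕ → ℕ
  | 0, 0 => 1
  | 0, _ + 1 => 0
  | _ + 1, 0 => 0
  | n + 1, k + 1 => (k + 1) * stirlingSecond n (k + 1) + stirlingSecond n k

lemma T2_eq_zero : ∀ (n : ℕ) (k : ℤ), (k < 0 ∨ (n : ℤ) ≤ k) → eulerianT 2 n k = 0
  | 0, k, _ => rfl
  | 1, k, h => by
      rw [eulerianT]; rw [if_neg]; omega
  | n+2, k, h => by
      rw [eulerianT]; rw [if_pos]; push_cast at h ⊢; omega

lemma T2_rec (n : ℕ) (k : ℤ) :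
    eulerianT 2 (n+2) k =
      (k + 1) * eulerianT 2 (n+1) k + (2*(n:ℤ) + 3 - k) * eulerianT 2 (n+1) (k-1) := by
  rw [eulerianT]
  by_cases h : k < 0 ∨ (n : ℤ) + 2 ≤ k
  · rw [if_pos h]
    rcases h with h | h
    · rw [T2_eq_zero (n+1) (k-1) (by omega)]
      rcases eq_or_lt_of_le (by omega : k ≤ -1) with h' | h'
      · subst h'; ring
      · rw [T2_eq_zero (n+1) k (by omega)]; ring
    · rw [T2_eq_zero (n+1) k (by push_cast; omega), T2_eq_zero (n+1) (k-1) (by push_cast; omega)]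
      ring
  · rw [if_neg h]; push_cast; ring

lemma T2_zero_eq_one : ∀ n : ℕ, 1 ≤ n → eulerianT 2 n 0 = 1
  | 1, _ => rfl
  | n+2, _ => by
      rw [T2_rec, show (0:ℤ)-1 = -1 by ring, T2_eq_zero (n+1) (-1) (by omega),
        T2_zero_eq_one (n+1) (by omega)]
      ring

lemma key (r L k : ℕ) (hk : k < L) (hkr : k ≤ r) :
    (k+1) * Nat.choose (r+L-k) (r+1) + (r-k) * Nat.choose (r+L-k-1) (r+1)
      = L * Nat.choose (r+L-k-1) r := by
  set a := r + L - k - 1 with ha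
  have h1 : r + L - k = a + 1 := by omega
  rw [h1, Nat.choose_succ_succ]
  have h2 : a.choose (r+1) * (r+1) = a.choose r * (a - r) := Nat.choose_succ_right_eq a r
  have h3 : a - r = L - k - 1 := by omega
  rw [h3] at h2
  have e1 : (k+1) * (a.choose r + a.choose (r+1)) + (r-k) * a.choose (r+1)
      = (k+1) * a.choose r + ((k+1) + (r-k)) * a.choose (r+1) := by ring
  have e2 : (k+1) + (r-k) = r + 1 := by omega
  rw [e1, e2, mul_comm (r+1) (a.choose (r+1)), h2]
  have h4 : k + 1 + (L - k - 1) = L := by omega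
  calc (k+1) * a.choose r + a.choose r * (L-k-1)
      = (k + 1 + (L-k-1)) * a.choose r := by ring
    _ = L * a.choose r := by rw [h4]

lemma S_rec_s8 (a b : ℕ) :
    stirlingSecond (a+1) (b+1) = (b+1) * stirlingSecond a (b+1) + stirlingSecond a b := rfl

lemma S_gt : ∀ n k : ℕ, n < k → stirlingSecond n k = 0
  | 0, k+1, _ => rfl
  | n+1, k+1, h => by
      rw [S_rec_s8, S_gt n (k+1) (by omega), S_gt n k (by omega)]; ring

lemma S_self : ∀ n : ℕ, stirlingSecond n n = 1
  | 0 => rfl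
  | n+1 => by rw [S_rec_s8, S_self n, S_gt n (n+1) (by omega)]; ring

lemma S_one : ∀ n : ℕ, stirlingSecond (n+1) 1 = 1
  | 0 => rfl
  | n+1 => by
      rw [S_rec_s8, S_one n]
      cases n with
      | zero => rfl
      | succ m => rw [show stirlingSecond (m+1+1) 0 = 0 from rfl]

lemma S_succ : ∀ l : ℕ, stirlingSecond (l+1) l = (l+1).choose 2
  | 0 => rfl
  | l+1 => by
      rw [S_rec_s8, S_succ l, S_self]
      rw [Nat.choose_succ_succ (l+1) 1, Nat.choose_one_right]
      ring

-- Step A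
lemma stepA (m ℓ : ℕ) (hm : 1 ≤ m) :
    ∑ k ∈ Finset.range (ℓ+1), eulerianT 2 m (k : ℤ) * ((2*m + (ℓ+1) - k - 1).choose (2*m) : ℤ)
      = (∑ k ∈ Finset.range ℓ, eulerianT 2 m (k : ℤ) * ((2*m + ℓ - k - 1).choose (2*m) : ℤ))
        + ∑ k ∈ Finset.range (ℓ+1), eulerianT 2 m (k : ℤ) * ((2*m + ℓ - k - 1).choose (2*m - 1) : ℤ) := by
  have h1 : ∀ k ∈ Finset.range (ℓ+1),
      eulerianT 2 m (k : ℤ) * ((2*m + (ℓ+1) - k - 1).choose (2*m) : ℤ)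
        = eulerianT 2 m (k : ℤ) * ((2*m + ℓ - k - 1).choose (2*m - 1) : ℤ)
          + eulerianT 2 m (k : ℤ) * ((2*m + ℓ - k - 1).choose (2*m) : ℤ) := by
    intro k hk
    simp only [Finset.mem_range] at hk
    have e1 : 2*m + (ℓ+1) - k - 1 = (2*m + ℓ - k - 1) + 1 := by omega
    have e2 : 2*m = (2*m - 1) + 1 := by omega
    rw [e1, e2, Nat.choose_succ_succ]
    push_cast
    ring
  rw [Finset.sum_congr rfl h1, Finset.sum_add_distrib]
  rw [Finset.sum_range_succ (fun k => eulerianT 2 m (k : ℤ) * ((2*m + ℓ - k - 1).choose (2*m) : ℤ))]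
  have : (2*m + ℓ - ℓ - 1).choose (2*m) = 0 :=
    Nat.choose_eq_zero_of_lt (by omega)
  rw [this]
  push_cast
  ring

-- Step B
lemma stepB (m ℓ : ℕ) :
    ∑ k ∈ Finset.range (ℓ+1), eulerianT 2 (m+2) (k : ℤ) * ((2*(m+2) + ℓ - k - 1).choose (2*(m+2) - 1) : ℤ)
      = ((ℓ:ℤ)+1) * ∑ k ∈ Finset.range (ℓ+1),
          eulerianT 2 (m+1) (k : ℤ) * ((2*(m+1) + (ℓ+1) - k - 1).choose (2*(m+1)) : ℤ) := by
  have expand : ∀ k ∈ Finset.range (ℓ+1),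
      eulerianT 2 (m+2) (k : ℤ) * ((2*(m+2) + ℓ - k - 1).choose (2*(m+2) - 1) : ℤ)
        = ((k:ℤ) + 1) * eulerianT 2 (m+1) (k : ℤ) * ((2*m + ℓ + 3 - k).choose (2*m+3) : ℤ)
          + (2*(m:ℤ) + 3 - k) * eulerianT 2 (m+1) ((k:ℤ)-1) * ((2*m + ℓ + 3 - k).choose (2*m+3) : ℤ) := by
    intro k hk
    simp only [Finset.mem_range] at hk
    have e1 : 2*(m+2) + ℓ - k - 1 = 2*m + ℓ + 3 - k := by omega
    have e2 : 2*(m+2) - 1 = 2*m+3 := by omega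
    rw [e1, e2, T2_rec]
    ring
  rw [Finset.sum_congr rfl expand, Finset.sum_add_distrib]
  -- reindex second sum
  have reindex :
      ∑ k ∈ Finset.range (ℓ+1),
        (2*(m:ℤ) + 3 - k) * eulerianT 2 (m+1) ((k:ℤ)-1) * ((2*m + ℓ + 3 - k).choose (2*m+3) : ℤ)
      = ∑ k ∈ Finset.range (ℓ+1),
        (2*(m:ℤ) + 2 - k) * eulerianT 2 (m+1) (k:ℤ) * ((2*m + ℓ + 2 - k).choose (2*m+3) : ℤ) := by
    rw [Finset.sum_range_succ'
      (fun k => (2*(m:ℤ) + 3 - k) * eulerianT 2 (m+1) ((k:ℤ)-1) * ((2*m + ℓ + 3 - k).choose (2*m+3) : ℤ))]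
    rw [Finset.sum_range_succ
      (fun k => (2*(m:ℤ) + 2 - k) * eulerianT 2 (m+1) (k:ℤ) * ((2*m + ℓ + 2 - k).choose (2*m+3) : ℤ))]
    have hz : eulerianT 2 (m+1) (-1 : ℤ) = 0 := T2_eq_zero _ _ (by norm_num)
    have hc : (2*m + ℓ + 2 - ℓ).choose (2*m+3) = 0 := Nat.choose_eq_zero_of_lt (by omega)
    simp only [hz, hc, Nat.cast_zero, zero_sub, mul_zero, zero_mul, add_zero]
    apply Finset.sum_congr rfl
    intro j hj
    simp only [Finset.mem_range] at hj
    have e1 : 2*m + ℓ + 3 - (j+1) = 2*m + ℓ + 2 - j := by omega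
    rw [e1]
    push_cast
    ring
  rw [reindex, ← Finset.sum_add_distrib, Finset.mul_sum]
  refine Finset.sum_congr rfl (fun k hk => ?_)
  simp only [Finset.mem_range] at hk
  by_cases hz : eulerianT 2 (m+1) (k:ℤ) = 0
  · rw [hz]; ring
  · have hb : 0 ≤ (k:ℤ) ∧ (k:ℤ) ≤ (m:ℤ) := by
      by_contra hcon
      exact hz (T2_eq_zero (m+1) k (by push_cast at hcon ⊢; omega))
    have hkm : k ≤ 2*m+2 := by omega
    have hkey := key (2*m+2) (ℓ+1) k (by omega) hkm
    simp only [show 2*m+2 + (ℓ+1) - k = 2*m + ℓ + 3 - k from by omega,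
      show 2*m + ℓ + 3 - k - 1 = 2*m + ℓ + 2 - k from by omega,
      show 2*m+2+1 = 2*m+3 from by omega] at hkey
    have e4 : 2*(m+1) + (ℓ+1) - k - 1 = 2*m + ℓ + 2 - k := by omega
    have e5 : 2*(m+1) = 2*m+2 := by omega
    rw [e4, e5]
    have hcast : ((k:ℤ) + 1) * ((2*m + ℓ + 3 - k).choose (2*m+3) : ℤ)
        + (2*(m:ℤ)+2 - k) * ((2*m + ℓ + 2 - k).choose (2*m+3) : ℤ)
        = ((ℓ:ℤ)+1) * ((2*m + ℓ + 2 - k).choose (2*m+2) : ℤ) := by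
      zify [hkm] at hkey
      linarith [hkey]
    linear_combination eulerianT 2 (m+1) (k:ℤ) * hcast

lemma aux (n : ℕ) (hn : 1 ≤ n) : ∀ ℓ : ℕ, 1 ≤ ℓ →
    (stirlingSecond (n + ℓ) ℓ : ℤ) =
      ∑ k ∈ Finset.range ℓ, eulerianT 2 n (k : ℤ) * ((2 * n + ℓ - k - 1).choose (2 * n) : ℤ) := by
  induction n, hn using Nat.le_induction with
  | base =>
    intro ℓ hℓ
    rw [show 1 + ℓ = ℓ + 1 from by omega, S_succ ℓ]
    rw [Finset.sum_eq_single_of_mem 0 (Finset.mem_range.2 (by omega))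
      (fun b _ hb0 => by
        rw [show eulerianT 2 1 (b : ℤ) = if (b : ℤ) = 0 then 1 else 0 from rfl,
          if_neg (by exact_mod_cast hb0), zero_mul])]
    rw [show eulerianT 2 1 ((0:ℕ) : ℤ) = 1 from rfl]
    rw [show 2 * 1 + ℓ - 0 - 1 = ℓ + 1 from by omega]
    norm_num
  | succ n hn ih =>
    obtain ⟨m, rfl⟩ : ∃ m, n = m + 1 := ⟨n - 1, by omega⟩
    intro ℓ hℓ
    induction ℓ, hℓ using Nat.le_induction with
    | base =>
      rw [show m + 1 + 1 + 1 = (m + 1 + 1) + 1 from rfl, S_one (m + 1 + 1)]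
      rw [Finset.sum_range_one]
      simp only [Nat.cast_zero]
      rw [T2_zero_eq_one (m + 1 + 1) (by omega)]
      rw [show 2 * (m + 1 + 1) + 1 - 0 - 1 = 2 * (m + 1 + 1) from by omega, Nat.choose_self]
      norm_num
    | succ ℓ hℓ ihℓ =>
      have h1 := ih (ℓ + 1) (by omega)
      rw [show m + 1 + (ℓ + 1) = m + 1 + 1 + ℓ from by omega] at h1
      rw [show m + 1 + 1 + (ℓ + 1) = (m + 1 + 1 + ℓ) + 1 from by omega,
        S_rec_s8 (m + 1 + 1 + ℓ) ℓ]
      push_cast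
      rw [h1, ihℓ]
      rw [show m + 1 + 1 = m + 2 from rfl]
      rw [stepA (m + 2) ℓ (by omega), stepB m ℓ]
      ring


theorem stirlingSecond_eq_sum_eulerianT2 (n ℓ : ℕ) (hn : 1 ≤ n) (hℓ : 1 ≤ ℓ) :
    (stirlingSecond (n + ℓ) ℓ : ℤ) =
      ∑ k ∈ Finset.range ℓ, eulerianT 2 n (k : ℤ) * ((2 * n + ℓ - k - 1).choose (2 * n) : ℤ) := by
  exact aux n hn ℓ hℓ
end

section
/- For m ≥ 1, n ≥ 1 and 0 ≤ k ≤ n-1, the inversion formula T^(m)_{n,k} = Σ_{ℓ=1}^{k+1} (-1)^{k-ℓ+1} · C(mn+1, k-ℓ+1) · f_{m;n}(ℓ) holds, where f_{m;n}(ℓ) is the ℓ-th power series coefficient of F̂_{m;n}(t) = t·S_{m;n}(t)/(1-t)^{mn+1}. -/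
lemma coeff_one_sub_X_pow (N j : ℕ) (hj : j ≤ N) :
    PowerSeries.coeff (R := ℤ) j ((1 - PowerSeries.X) ^ N) =
      (-1 : ℤ) ^ j * (N.choose j : ℤ) := by
  have hc : ∀ b : ℕ, ((-1 : PowerSeries ℤ) ^ (b + N) * 1 ^ b * PowerSeries.X ^ (N - b) *
      ((N.choose b : ℕ) : PowerSeries ℤ)) =
      PowerSeries.C (R := ℤ) ((-1) ^ (b + N) * (N.choose b : ℤ)) * PowerSeries.X ^ (N - b) := by
    intro b
    rw [map_mul, map_pow, map_neg, map_one, map_natCast]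
    ring
  rw [sub_pow, map_sum]
  rw [Finset.sum_congr rfl fun b _ => by rw [hc b]]
  rw [Finset.sum_eq_single (N - j)]
  · rw [PowerSeries.coeff_C_mul, PowerSeries.coeff_X_pow,
      if_pos (by omega : j = N - (N - j)), mul_one]
    have h2 : (-1 : ℤ) ^ (N - j + N) = (-1) ^ j := by
      rw [show N - j + N = j + 2 * (N - j) by omega, pow_add, pow_mul]
      simp
    rw [Nat.choose_symm hj, h2]
  · intro b hb hbne
    rw [Finset.mem_range] at hb
    rw [PowerSeries.coeff_C_mul, PowerSeries.coeff_X_pow, if_neg (by omega), mul_zero]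
  · intro h
    exact absurd (Finset.mem_range.mpr (by omega)) h

theorem eulerianT_inversion (m n : ℕ) (hm : 1 ≤ m) (hn : 1 ≤ n) (f : ℕ → ℤ)
    (hf : (∑ k ∈ Finset.range n, PowerSeries.C (R := ℤ) (eulerianT m n (k : ℤ)) *
        PowerSeries.X ^ (k + 1)) =
      (1 - PowerSeries.X) ^ (m * n + 1) * PowerSeries.mk f)
    (k : ℕ) (hk : k ≤ n - 1) :
    eulerianT m n (k : ℤ) =
      ∑ ℓ ∈ Finset.Icc 1 (k + 1),
        (-1 : ℤ) ^ (k + 1 - ℓ) * ((m * n + 1).choose (k + 1 - ℓ) : ℤ) * f ℓ := by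
  set N := m * n + 1 with hN
  have hkn : k < n := by omega
  have hk1N : k + 1 ≤ N := by nlinarith
  -- f 0 = 0
  have hf0 : f 0 = 0 := by
    have h0 := congrArg (PowerSeries.coeff (R := ℤ) 0) hf
    rw [map_sum] at h0
    rw [Finset.sum_eq_zero (fun j _ => by
      rw [PowerSeries.coeff_C_mul, PowerSeries.coeff_X_pow, if_neg (by omega), mul_zero])] at h0
    rw [PowerSeries.coeff_mul, Finset.Nat.antidiagonal_zero, Finset.sum_singleton,
      coeff_one_sub_X_pow N 0 (Nat.zero_le N), PowerSeries.coeff_mk] at h0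
    simpa using h0.symm
  -- extract coefficient k+1
  have hcoef := congrArg (PowerSeries.coeff (R := ℤ) (k + 1)) hf
  rw [map_sum] at hcoef
  rw [Finset.sum_eq_single k (fun b _ hbne => by
      rw [PowerSeries.coeff_C_mul, PowerSeries.coeff_X_pow, if_neg (by omega), mul_zero])
    (fun h => absurd (Finset.mem_range.mpr hkn) h)] at hcoef
  rw [PowerSeries.coeff_C_mul, PowerSeries.coeff_X_pow, if_pos rfl, mul_one] at hcoef
  rw [PowerSeries.coeff_mul] at hcoef
  rw [Finset.Nat.sum_antidiagonal_eq_sum_range_succ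
      (fun i j => PowerSeries.coeff (R := ℤ) i ((1 - PowerSeries.X) ^ N) *
        PowerSeries.coeff (R := ℤ) j (PowerSeries.mk f))] at hcoef
  rw [Finset.sum_congr rfl (fun i hi => by
      rw [coeff_one_sub_X_pow N i (by have := Finset.mem_range.mp hi; omega),
        PowerSeries.coeff_mk])] at hcoef
  rw [← Finset.sum_range_reflect] at hcoef
  rw [Finset.sum_congr rfl (fun ℓ hℓ => by
      have := Finset.mem_range.mp hℓ
      show (-1 : ℤ) ^ (k + 1 + 1 - 1 - ℓ) * (N.choose (k + 1 + 1 - 1 - ℓ) : ℤ) *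
          f (k + 1 - (k + 1 + 1 - 1 - ℓ)) =
        (-1 : ℤ) ^ (k + 1 - ℓ) * (N.choose (k + 1 - ℓ) : ℤ) * f ℓ
      congr 2 <;> omega)] at hcoef
  rw [hcoef]
  have hsplit : Finset.range (k + 1 + 1) = insert 0 (Finset.Icc 1 (k + 1)) := by
    ext x
    simp only [Finset.mem_range, Finset.mem_insert, Finset.mem_Icc]
    omega
  rw [hsplit, Finset.sum_insert (by simp)]
  simp [hf0]
end

section
/- For n ≥ 1 and 0 ≤ k ≤ n-1, the second-order Eulerian numbers can be expressed via Stirling numbers of the second kind: T^(2)_{n,k} = Σ_{ℓ=1}^{k+1} (-1)^{k-ℓ+1} · C(2n+1, k-ℓ+1) · S(n+ℓ, ℓ). -/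
lemma srec (p q : ℕ) : stirlingSecond (p+1) (q+1)
    = (q+1) * stirlingSecond p (q+1) + stirlingSecond p q := rfl
lemma szero (p : ℕ) : stirlingSecond (p+1) 0 = 0 := rfl

lemma s_top_lt (m q : ℕ) (h : m < q) : stirlingSecond m q = 0 := by
  induction m generalizing q with
  | zero => cases q with | zero => omega | succ q => rfl
  | succ m ih =>
    cases q with
    | zero => omega
    | succ q => rw [srec, ih (q+1) (by omega), ih q (by omega)]; ring

lemma s_diag (m : ℕ) : stirlingSecond m m = 1 := by
  induction m with
  | zero => rfl
  | succ m ih => rw [srec, s_top_lt m (m+1) (by omega), ih]; ring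

lemma s_one (m : ℕ) : stirlingSecond (m+1) 1 = 1 := by
  induction m with
  | zero => rfl
  | succ m ih => rw [srec, ih, szero]

noncomputable def f (n k : ℕ) : ℤ :=
  ∑ j ∈ Finset.range (k+1),
    (-1:ℤ)^j * ((2*n+1).choose j : ℤ) * (stirlingSecond (n+k+1-j) (k+1-j) : ℤ)

lemma f_zero (n : ℕ) : f n 0 = 1 := by
  unfold f
  rw [Finset.sum_range_one]
  norm_num [s_one]

lemma f0 (k : ℕ) : f 0 (k+1) = 0 := by
  unfold f
  rw [Finset.sum_range_succ', Finset.sum_range_succ']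
  have h2 : ∀ j ∈ Finset.range k, (-1:ℤ) ^ (j + 1 + 1) * ((2 * 0 + 1).choose (j + 1 + 1) : ℤ) *
      (stirlingSecond (0 + (k + 1) + 1 - (j + 1 + 1)) (k + 1 + 1 - (j + 1 + 1)) : ℤ) = 0 := by
    intro j hj
    have hc0 : (2 * 0 + 1).choose (j + 1 + 1) = 0 := Nat.choose_eq_zero_of_lt (by omega)
    rw [hc0]
    push_cast; ring
  rw [Finset.sum_congr rfl h2]
  have e1 : 0 + (k + 1) + 1 - (0 + 1) = k + 1 := by omega
  have e2 : k + 1 + 1 - (0 + 1) = k + 1 := by omega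
  have e3 : 0 + (k + 1) + 1 - 0 = k + 2 := by omega
  have e4 : k + 1 + 1 - 0 = k + 2 := by omega
  rw [e1, e2, e3, e4, s_diag, s_diag]
  simp

lemma shift (m k : ℕ) (X : ℕ → ℤ) :
    ∑ j ∈ Finset.range (k+1), (-1:ℤ)^j * ((m+1).choose j : ℤ) * X j
    = ∑ j ∈ Finset.range (k+1), (-1:ℤ)^j * (m.choose j : ℤ) * X j
      - ∑ j ∈ Finset.range k, (-1:ℤ)^j * (m.choose j : ℤ) * X (j+1) := by
  rw [Finset.sum_range_succ' (fun j => (-1:ℤ)^j * ((m+1).choose j : ℤ) * X j) k,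
      Finset.sum_range_succ' (fun j => (-1:ℤ)^j * (m.choose j : ℤ) * X j) k]
  simp only [Nat.choose_succ_succ, Nat.cast_add, Nat.choose_zero_right, Nat.cast_one]
  have : ∀ j ∈ Finset.range k,
      (-1:ℤ)^(j+1) * ((m.choose j : ℤ) + (m.choose (j+1) : ℤ)) * X (j+1)
      = (-1:ℤ)^(j+1) * (m.choose (j+1) : ℤ) * X (j+1)
        - (-1:ℤ)^j * (m.choose j : ℤ) * X (j+1) := by
    intro j _; ring
  rw [Finset.sum_congr rfl this, Finset.sum_sub_distrib]
  ring

lemma choose_id (m j : ℕ) :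
    ((j:ℤ)+1) * (m.choose (j+1) : ℤ) = ((m:ℤ) - j) * (m.choose j : ℤ) := by
  rcases le_or_gt (j+1) m with h | h
  · have := Nat.choose_succ_right_eq m j
    have hcast : ((m.choose (j+1) * (j+1) : ℕ) : ℤ) = ((m.choose j * (m - j) : ℕ) : ℤ) := by
      rw [this]
    push_cast [Nat.cast_sub (by omega : j ≤ m)] at hcast
    linarith
  · rcases le_or_gt j m with h2 | h2
    · have hm : m = j := by omega
      subst hm
      simp [Nat.choose_succ_self]
    · rw [Nat.choose_eq_zero_of_lt (by omega), Nat.choose_eq_zero_of_lt (by omega)]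
      ring


lemma frec_aux (n k K : ℕ) (hK : K = k + 1) :
    f (n+1) K = ((K:ℤ)+1) * f n K + ((2*(n:ℤ)+1) - (K:ℤ)) * f n k := by
  set X : ℕ → ℤ := fun j => (stirlingSecond (n+K+2-j) (K+1-j) : ℤ) with hX
  set c : ℕ → ℤ := fun j => (((2*n+1).choose j : ℕ) : ℤ) with hc
  set w : ℕ → ℤ := fun j => (stirlingSecond (n+K+1-j) (K+1-j) : ℤ) with hw
  set v : ℕ → ℤ := fun j => (stirlingSecond (n+K-j) (K-j) : ℤ) with hv
  have step1 : f (n+1) K = ∑ j ∈ Finset.range (K+1), (-1:ℤ)^j * ((2*n+3).choose j : ℤ) * X j := by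
    unfold f
    apply Finset.sum_congr rfl
    intro j hj
    have e1 : 2*(n+1)+1 = 2*n+3 := by omega
    have e2 : (n+1)+K+1-j = n+K+2-j := by omega
    rw [e1, e2]
  have e23 : (2*n+3) = (2*n+2)+1 := by omega
  have e22 : (2*n+2) = (2*n+1)+1 := by omega
  have step2 : ∑ j ∈ Finset.range (K+1), (-1:ℤ)^j * ((2*n+3).choose j : ℤ) * X j
      = (∑ j ∈ Finset.range (K+1), (-1:ℤ)^j * c j * X j)
        - 2 * (∑ j ∈ Finset.range K, (-1:ℤ)^j * c j * X (j+1))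
        + ∑ j ∈ Finset.range k, (-1:ℤ)^j * c j * X (j+1+1) := by
    rw [e23, shift (2*n+2) K X, e22, shift (2*n+1) K X]
    have h2 : ∑ j ∈ Finset.range K, (-1:ℤ)^j * (((2*n+1)+1).choose j : ℤ) * X (j+1)
        = (∑ j ∈ Finset.range K, (-1:ℤ)^j * ((2*n+1).choose j : ℤ) * X (j+1))
          - ∑ j ∈ Finset.range k, (-1:ℤ)^j * ((2*n+1).choose j : ℤ) * X (j+1+1) := by
      rw [hK]
      exact shift (2*n+1) k (fun j => X (j+1))
    rw [h2]
    ring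
  have step4 : ∑ j ∈ Finset.range (K+1), (-1:ℤ)^j * c j * X j
      = (∑ j ∈ Finset.range (K+1), ((K:ℤ)+1-j) * ((-1:ℤ)^j * c j * w j))
        + ∑ j ∈ Finset.range (K+1), (-1:ℤ)^j * c j * X (j+1) := by
    have hterm : ∀ j ∈ Finset.range (K+1),
        (-1:ℤ)^j * c j * X j
        = ((K:ℤ)+1-j) * ((-1:ℤ)^j * c j * w j) + (-1:ℤ)^j * c j * X (j+1) := by
      intro j hj
      have hjK : j ≤ K := by simpa [Nat.lt_succ_iff] using hj
      have e1 : n+K+2-j = (n+K+1-j)+1 := by omega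
      have e2 : K+1-j = (K-j)+1 := by omega
      have e3 : n+K+2-(j+1) = n+K+1-j := by omega
      have e4 : K+1-(j+1) = K-j := by omega
      simp only [hX, hw, e1, e2, e3, e4, srec]
      have hsub : (((K-j : ℕ) : ℤ)) = (K:ℤ) - j := Nat.cast_sub hjK
      push_cast [hsub]
      ring
    rw [Finset.sum_congr rfl hterm, Finset.sum_add_distrib]
  have hlast : ∑ j ∈ Finset.range (K+1), (-1:ℤ)^j * c j * X (j+1)
      = ∑ j ∈ Finset.range K, (-1:ℤ)^j * c j * X (j+1) := by
    rw [Finset.sum_range_succ]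
    have hz : X (K+1) = 0 := by
      simp only [hX]
      have e1 : n+K+2-(K+1) = n+1 := by omega
      have e2 : K+1-(K+1) = 0 := by omega
      rw [e1, e2, szero]; rfl
    rw [hz]; ring
  have step5 : ∑ j ∈ Finset.range K, (-1:ℤ)^j * c j * X (j+1)
      = (∑ j ∈ Finset.range K, ((K:ℤ)-j) * ((-1:ℤ)^j * c j * v j))
        + ∑ j ∈ Finset.range k, (-1:ℤ)^j * c j * X (j+1+1) := by
    have hterm : ∀ j ∈ Finset.range K,
        (-1:ℤ)^j * c j * X (j+1)
        = ((K:ℤ)-j) * ((-1:ℤ)^j * c j * v j) + (-1:ℤ)^j * c j * X (j+1+1) := by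
      intro j hj
      have hjK : j ≤ k := by
        have := Finset.mem_range.mp hj; omega
      have e1 : n+K+2-(j+1) = (n+K-j)+1 := by omega
      have e2 : K+1-(j+1) = (K-1-j)+1 := by omega
      have e3 : n+K+2-(j+1+1) = n+K-j := by omega
      have e4 : K+1-(j+1+1) = K-1-j := by omega
      have e5 : K-j = (K-1-j)+1 := by omega
      simp only [hX, hv, e1, e2, e3, e4, e5, srec]
      have hsub : (((K-1-j : ℕ) : ℤ)) = (K:ℤ) - 1 - j := by
        rw [Nat.cast_sub (by omega : j ≤ K - 1), Nat.cast_sub (by omega : 1 ≤ K)]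
        push_cast; ring
      push_cast [hsub]
      ring
    rw [Finset.sum_congr rfl hterm, Finset.sum_add_distrib]
    congr 1
    rw [hK, Finset.sum_range_succ]
    have hz : X (k+1+1) = 0 := by
      simp only [hX]
      have e1 : n+K+2-(k+1+1) = n+1 := by omega
      have e2 : K+1-(k+1+1) = 0 := by omega
      rw [e1, e2, szero]; rfl
    rw [hz]; ring
  have step6 : ∑ j ∈ Finset.range (K+1), (-(j:ℤ)) * ((-1:ℤ)^j * c j * w j)
      = ∑ j ∈ Finset.range K, ((2*(n:ℤ)+1) - j) * ((-1:ℤ)^j * c j * v j) := by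
    rw [Finset.sum_range_succ' (fun j => (-(j:ℤ)) * ((-1:ℤ)^j * c j * w j)) K]
    have hterm : ∀ j ∈ Finset.range K,
        (-((j+1:ℕ):ℤ)) * ((-1:ℤ)^(j+1) * c (j+1) * w (j+1))
        = ((2*(n:ℤ)+1) - j) * ((-1:ℤ)^j * c j * v j) := by
      intro j hj
      have hwv : w (j+1) = v j := by
        simp only [hw, hv]
        have e1 : n+K+1-(j+1) = n+K-j := by omega
        have e2 : K+1-(j+1) = K-j := by omega
        rw [e1, e2]
      rw [hwv]
      have hcid := choose_id (2*n+1) j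
      simp only [hc]
      have hc2 : ((2*(n:ℤ)+1) : ℤ) = ((2*n+1 : ℕ) : ℤ) := by push_cast; ring
      rw [hc2]
      calc (-((j+1:ℕ):ℤ)) * ((-1:ℤ)^(j+1) * ((2*n+1).choose (j+1) : ℤ) * v j)
          = (((j:ℤ)+1) * ((2*n+1).choose (j+1) : ℤ)) * ((-1:ℤ)^j * v j) := by
            rw [pow_succ]; push_cast; ring
        _ = ((((2*n+1:ℕ)):ℤ) - j) * ((2*n+1).choose j : ℤ) * ((-1:ℤ)^j * v j) := by
            rw [hcid]
        _ = (((2*n+1:ℕ):ℤ) - j) * ((-1:ℤ)^j * ((2*n+1).choose j : ℤ) * v j) := by ring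
    rw [Finset.sum_congr rfl hterm]
    simp
  have hfnK : f n K = ∑ j ∈ Finset.range (K+1), (-1:ℤ)^j * c j * w j := rfl
  have hfnk : f n k = ∑ j ∈ Finset.range K, (-1:ℤ)^j * c j * v j := by
    unfold f
    rw [hK]
    apply Finset.sum_congr rfl
    intro j hj
    have e1 : n+k+1-j = n+K-j := by omega
    have e2 : k+1-j = K-j := by omega
    rw [e1, e2]
  rw [step1, step2, step4, hlast, step5, hfnK, hfnk]
  have expand1 : ∑ j ∈ Finset.range (K+1), ((K:ℤ)+1-j) * ((-1:ℤ)^j * c j * w j)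
      = ((K:ℤ)+1) * (∑ j ∈ Finset.range (K+1), (-1:ℤ)^j * c j * w j)
        + ∑ j ∈ Finset.range (K+1), (-(j:ℤ)) * ((-1:ℤ)^j * c j * w j) := by
    rw [Finset.mul_sum, ← Finset.sum_add_distrib]
    apply Finset.sum_congr rfl; intro j _; ring
  have expand2 : ∑ j ∈ Finset.range K, ((K:ℤ)-j) * ((-1:ℤ)^j * c j * v j)
      = ((K:ℤ) - (2*(n:ℤ)+1)) * (∑ j ∈ Finset.range K, (-1:ℤ)^j * c j * v j)
        + ∑ j ∈ Finset.range K, ((2*(n:ℤ)+1) - j) * ((-1:ℤ)^j * c j * v j) := by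
    rw [Finset.mul_sum, ← Finset.sum_add_distrib]
    apply Finset.sum_congr rfl; intro j _; ring
  rw [expand1, expand2, step6]
  ring

lemma ebound (n k : ℕ) (h : n ≤ k) : eulerianT 2 n (k : ℤ) = 0 := by
  match n with
  | 0 => rfl
  | 1 =>
    have : (k : ℤ) ≠ 0 := by omega
    simp [eulerianT, this]
    omega
  | n + 2 =>
    rw [eulerianT]
    have : ((n:ℤ) + 2 ≤ (k:ℤ)) := by exact_mod_cast h
    simp [this]

lemma eneg (n : ℕ) : eulerianT 2 n (-1) = 0 := by
  match n with
  | 0 => rfl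
  | 1 => simp [eulerianT]
  | n + 2 => rw [eulerianT]; norm_num

lemma main_lemma (n : ℕ) : ∀ k : ℕ, eulerianT 2 (n+1) (k:ℤ) = f (n+1) k := by
  induction n with
  | zero =>
    intro k
    cases k with
    | zero => rw [f_zero]; simp [eulerianT]
    | succ k =>
      have h1 : eulerianT 2 1 ((k+1 : ℕ):ℤ) = 0 := by
        simp only [eulerianT]
        rw [if_neg (by push_cast; omega)]
      rw [h1, frec_aux 0 k (k+1) rfl, f0 k]
      cases k with
      | zero => rw [f_zero]; norm_num
      | succ k => rw [f0 k]; push_cast; ring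
  | succ n ih =>
    intro k
    cases k with
    | zero =>
      have h0 : eulerianT 2 (n+2) ((0:ℕ):ℤ) =
          (0 + 1) * eulerianT 2 (n+1) 0 +
            ((2:ℤ) * ((n:ℤ)+2) - 0 - 2 + 1) * eulerianT 2 (n+1) (0 - 1) := by
        rw [eulerianT, if_neg (by push_cast; simp only [false_or]; omega)]
        norm_num
      push_cast at h0 ⊢
      rw [h0]
      rw [eneg]
      have he : eulerianT 2 (n+1) ((0:ℕ):ℤ) = f (n+1) 0 := ih 0
      push_cast at he
      rw [he, f_zero, f_zero]
      ring
    | succ k =>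
      have hfr := frec_aux (n+1) k (k+1) rfl
      rcases le_or_gt (k+1) (n+1) with hle | hlt
      · have hguard : ¬ (((k+1:ℕ):ℤ) < 0 ∨ (n:ℤ) + 2 ≤ ((k+1:ℕ):ℤ)) := by
          push_cast; omega
        have h0 : eulerianT 2 (n+2) ((k+1:ℕ):ℤ) =
            (((k+1:ℕ):ℤ) + 1) * eulerianT 2 (n+1) ((k+1:ℕ):ℤ) +
              ((2:ℤ) * ((n:ℤ)+2) - ((k+1:ℕ):ℤ) - 2 + 1) *
                eulerianT 2 (n+1) (((k+1:ℕ):ℤ) - 1) := by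
          rw [eulerianT]
          simp only [hguard, if_false]
          norm_num
        have hm1 : (((k+1:ℕ):ℤ) - 1) = ((k:ℕ):ℤ) := by push_cast; ring
        rw [h0, hm1, ih (k+1), ih k, hfr]
        push_cast
        ring
      · have hguard : (((k+1:ℕ):ℤ) < 0 ∨ (n:ℤ) + 2 ≤ ((k+1:ℕ):ℤ)) := by
          right; push_cast; omega
        have h0 : eulerianT 2 (n+2) ((k+1:ℕ):ℤ) = 0 := by
          rw [eulerianT]
          simp only [hguard, if_true]
        rw [h0, hfr, ← ih (k+1), ← ih k,
            ebound (n+1) (k+1) (by omega), ebound (n+1) k (by omega)]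
        ring

lemma reindex (n k : ℕ) : f n k =
    ∑ ℓ ∈ Finset.Icc 1 (k + 1),
      (-1 : ℤ) ^ (k + 1 - ℓ) * ((2 * n + 1).choose (k + 1 - ℓ) : ℤ) *
        (stirlingSecond (n + ℓ) ℓ : ℤ) := by
  unfold f
  apply Finset.sum_nbij' (i := fun j => k + 1 - j) (j := fun ℓ => k + 1 - ℓ)
  · intro j hj
    simp only [Finset.mem_range] at hj
    simp only [Finset.mem_Icc]
    omega
  · intro ℓ hℓ
    simp only [Finset.mem_Icc] at hℓ
    simp only [Finset.mem_range]
    omega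
  · intro j hj
    simp only [Finset.mem_range] at hj
    omega
  · intro ℓ hℓ
    simp only [Finset.mem_Icc] at hℓ
    omega
  · intro j hj
    simp only [Finset.mem_range] at hj
    have e1 : k + 1 - (k + 1 - j) = j := by omega
    have e2 : n + (k + 1 - j) = n + k + 1 - j := by omega
    rw [e1, e2]

theorem eulerianT2_eq_sum_stirlingSecond (n k : ℕ) (hn : 1 ≤ n) (hk : k ≤ n - 1) :
    eulerianT 2 n (k : ℤ) =
      ∑ ℓ ∈ Finset.Icc 1 (k + 1),
        (-1 : ℤ) ^ (k + 1 - ℓ) * ((2 * n + 1).choose (k + 1 - ℓ) : ℤ) *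
          (stirlingSecond (n + ℓ) ℓ : ℤ) := by
  obtain ⟨m, rfl⟩ : ∃ m, n = m + 1 := ⟨n - 1, by omega⟩
  rw [main_lemma m k, reindex (m+1) k]
end

section
/- For k ≥ 1 and n ≥ 0, the unsigned Stirling number of the first kind satisfies [n choose n-k] (Stirling cycle number c(n, n-k)) = Σ_{i=k+1}^{n} T^(2)_{k, 2k-i} · C(2k + n - i, 2k). -/
/-- Unsigned Stirling numbers of the first kind `c(n,j)` (Stirling cycle numbers),
with integer index `j` (so `c(n,j) = 0` for `j < 0`). -/
def stirlingFirst : ℕ → ℤ → ℕ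
  | 0, j => if j = 0 then 1 else 0
  | n + 1, j => n * stirlingFirst n j + stirlingFirst n (j - 1)

lemma eulerianT2_neg : ∀ (n : ℕ) (k : ℤ), k < 0 → eulerianT 2 n k = 0
  | 0, k, _ => rfl
  | 1, k, h => by simp [eulerianT, show k ≠ 0 by omega]
  | n + 2, k, h => by rw [eulerianT, if_pos (Or.inl h)]

lemma eulerianT2_ge : ∀ (n : ℕ) (k : ℤ), (n : ℤ) ≤ k → eulerianT 2 n k = 0
  | 0, k, _ => rfl
  | 1, k, h => by simp [eulerianT, show k ≠ 0 by omega]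
  | n + 2, k, h => by
      rw [eulerianT, if_pos (Or.inr (by push_cast at h ⊢; omega))]

lemma stirlingFirst_gt : ∀ (n : ℕ) (j : ℤ), (n : ℤ) < j → stirlingFirst n j = 0
  | 0, j, h => by simp [stirlingFirst, show j ≠ 0 by omega]
  | n + 1, j, h => by
      rw [stirlingFirst, stirlingFirst_gt n j (by push_cast at h ⊢; omega),
        stirlingFirst_gt n (j - 1) (by push_cast at h ⊢; omega)]
      simp

lemma stirlingFirst_self : ∀ (n : ℕ), stirlingFirst n (n : ℤ) = 1
  | 0 => rfl
  | n + 1 => by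
      rw [stirlingFirst, stirlingFirst_gt n (((n + 1 : ℕ) : ℤ)) (by push_cast; omega),
        show (((n + 1 : ℕ) : ℤ)) - 1 = (n : ℤ) by push_cast; ring, stirlingFirst_self n]
      simp

lemma choose_mul_int (a m : ℕ) (hm : 1 ≤ m) :
    (m : ℤ) * (a.choose m : ℤ) = ((a : ℤ) - m + 1) * (a.choose (m - 1) : ℤ) := by
  obtain ⟨m', rfl⟩ : ∃ m', m = m' + 1 := ⟨m - 1, by omega⟩
  simp only [Nat.add_sub_cancel]
  rcases le_or_gt (m' + 1) a with h | h
  · have key := Nat.choose_succ_right_eq a m'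
    have key2 := congrArg (fun x : ℕ => (x : ℤ)) key
    push_cast [Nat.cast_sub (by omega : m' ≤ a)] at key2
    push_cast
    linear_combination key2
  · rw [Nat.choose_eq_zero_of_lt h]
    by_cases h2 : a < m'
    · rw [Nat.choose_eq_zero_of_lt h2]; simp
    · have : m' = a := by omega
      subst this; push_cast; ring

lemma key_binom (a j m : ℕ) (hm : 1 ≤ m) :
    ((j : ℤ) + 1) * (a.choose m : ℤ) + ((m : ℤ) - 1 - j) * ((a + 1).choose m : ℤ) =
      ((a : ℤ) - j) * (a.choose (m - 1) : ℤ) := by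
  obtain ⟨m', rfl⟩ : ∃ m', m = m' + 1 := ⟨m - 1, by omega⟩
  simp only [Nat.add_sub_cancel]
  have hpas : ((a + 1).choose (m' + 1) : ℤ) = (a.choose m' : ℤ) + (a.choose (m' + 1) : ℤ) := by
    exact_mod_cast congrArg (fun x : ℕ => (x : ℤ)) (Nat.choose_succ_succ a m')
  have h1 := choose_mul_int a (m' + 1) (by omega)
  simp only [Nat.add_sub_cancel] at h1
  push_cast at h1 ⊢
  linear_combination h1 + ((m' : ℤ) + 1 - 1 - j) * hpas

lemma auxA : ∀ (n k : ℕ), 1 ≤ k →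
    (stirlingFirst n ((n : ℤ) - k) : ℤ) =
      ∑ j ∈ Finset.range k, eulerianT 2 k (j : ℤ) * (((n + j).choose (2 * k) : ℕ) : ℤ)
  | 0, k, hk => by
      have h0 : stirlingFirst 0 (((0 : ℕ) : ℤ) - (k : ℤ)) = 0 := by
        simp only [stirlingFirst, Nat.cast_zero]
        rw [if_neg (by omega)]
      rw [h0, Finset.sum_eq_zero]
      · simp
      · intro j hj
        simp only [Finset.mem_range] at hj
        rw [Nat.choose_eq_zero_of_lt (by omega)]
        simp
  | n + 1, k, hk => by
      rw [stirlingFirst]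
      rcases eq_or_lt_of_le hk with h1 | h2
      · -- k = 1
        subst h1
        push_cast
        rw [show (n : ℤ) + 1 - 1 - 1 = (n : ℤ) - 1 by ring,
          show (n : ℤ) + 1 - 1 = (n : ℤ) by ring, stirlingFirst_self n]
        have ih := auxA n 1 le_rfl
        push_cast at ih
        rw [ih]
        rw [Finset.sum_range_one, Finset.sum_range_one]
        rw [show eulerianT 2 1 ((0 : ℕ) : ℤ) = 1 by simp [eulerianT]]
        have hch : (n + 1).choose 2 = n.choose 1 + n.choose 2 := Nat.choose_succ_succ n 1
        rw [show n + 1 + 0 = n + 1 by ring, show n + 0 = n by ring]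
        push_cast [hch, Nat.choose_one_right]
        ring
      · -- k ≥ 2
        obtain ⟨p, rfl⟩ : ∃ p, k = p + 2 := ⟨k - 2, by omega⟩
        push_cast
        rw [show (n : ℤ) + 1 - ((p : ℤ) + 2) - 1 = (n : ℤ) - ((p : ℤ) + 2) by ring,
          show (n : ℤ) + 1 - ((p : ℤ) + 2) = (n : ℤ) - ((p : ℤ) + 1) by ring]
        have ih1 := auxA n (p + 2) (by omega)
        have ih2 := auxA n (p + 1) (by omega)
        push_cast at ih1 ih2
        rw [ih1, ih2]
        -- Pascal on the RHS
        have pascal : ∀ j : ℕ,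
            ((n + 1 + j).choose (2 * (p + 2)) : ℤ) =
              ((n + j).choose (2 * p + 3) : ℤ) + ((n + j).choose (2 * (p + 2)) : ℤ) := by
          intro j
          have hh := Nat.choose_succ_succ (n + j) (2 * p + 3)
          simp only [Nat.succ_eq_add_one] at hh
          rw [show 2 * p + 3 + 1 = 2 * (p + 2) by ring] at hh
          rw [show n + 1 + j = n + j + 1 by ring, hh]
          push_cast; ring
        have hsplit :
            ∑ j ∈ Finset.range (p + 2),
              eulerianT 2 (p + 2) (j : ℤ) * ((n + 1 + j).choose (2 * (p + 2)) : ℤ) =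
            (∑ j ∈ Finset.range (p + 2),
              eulerianT 2 (p + 2) (j : ℤ) * ((n + j).choose (2 * p + 3) : ℤ)) +
            ∑ j ∈ Finset.range (p + 2),
              eulerianT 2 (p + 2) (j : ℤ) * ((n + j).choose (2 * (p + 2)) : ℤ) := by
          rw [← Finset.sum_add_distrib]
          refine Finset.sum_congr rfl fun j _ => ?_
          rw [pascal j]; ring
        rw [hsplit]
        have hrec : ∀ j ∈ Finset.range (p + 2),
            eulerianT 2 (p + 2) (j : ℤ) * ((n + j).choose (2 * p + 3) : ℤ) =
              ((j : ℤ) + 1) * eulerianT 2 (p + 1) (j : ℤ) * ((n + j).choose (2 * p + 3) : ℤ)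
              + (2 * (p : ℤ) + 3 - j) * eulerianT 2 (p + 1) ((j : ℤ) - 1) *
                  ((n + j).choose (2 * p + 3) : ℤ) := by
          intro j hj
          simp only [Finset.mem_range] at hj
          rw [show (eulerianT 2 (p + 2) (j : ℤ)) =
              ((j : ℤ) + 1) * eulerianT 2 (p + 1) (j : ℤ) +
                (2 * (p : ℤ) + 3 - j) * eulerianT 2 (p + 1) ((j : ℤ) - 1) by
            rw [eulerianT, if_neg (by push_cast; omega)]
            push_cast
            ring_nf]
          ring
        have hA : ∑ j ∈ Finset.range (p + 2),
            ((j : ℤ) + 1) * eulerianT 2 (p + 1) (j : ℤ) * ((n + j).choose (2 * p + 3) : ℤ) =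
            ∑ j ∈ Finset.range (p + 1),
            ((j : ℤ) + 1) * eulerianT 2 (p + 1) (j : ℤ) * ((n + j).choose (2 * p + 3) : ℤ) := by
          rw [Finset.sum_range_succ,
            show eulerianT 2 (p + 1) (((p + 1 : ℕ)) : ℤ) = 0 from
              eulerianT2_ge (p + 1) _ (by push_cast; omega)]
          ring
        have hB : ∑ j ∈ Finset.range (p + 2),
            (2 * (p : ℤ) + 3 - j) * eulerianT 2 (p + 1) ((j : ℤ) - 1) *
              ((n + j).choose (2 * p + 3) : ℤ) =
            ∑ j ∈ Finset.range (p + 1),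
            (2 * (p : ℤ) + 2 - j) * eulerianT 2 (p + 1) (j : ℤ) *
              ((n + j + 1).choose (2 * p + 3) : ℤ) := by
          rw [Finset.sum_range_succ'
            (fun j => (2 * (p : ℤ) + 3 - j) * eulerianT 2 (p + 1) ((j : ℤ) - 1) *
              ((n + j).choose (2 * p + 3) : ℤ)) (p + 1)]
          rw [show eulerianT 2 (p + 1) (((0 : ℕ) : ℤ) - 1) = 0 from
            eulerianT2_neg (p + 1) _ (by norm_num)]
          simp only [mul_zero, zero_mul, add_zero]
          refine Finset.sum_congr rfl fun j hj => ?_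
          simp only [Finset.mem_range] at hj
          have e1 : ((j + 1 : ℕ) : ℤ) - 1 = (j : ℤ) := by push_cast; ring
          have e2 : (2 * (p : ℤ) + 3 - ((j + 1 : ℕ) : ℤ)) = 2 * (p : ℤ) + 2 - j := by
            push_cast; ring
          have e3 : n + (j + 1) = n + j + 1 := by ring
          rw [e1, e2, e3]
        have hterm : ∀ j ∈ Finset.range (p + 1),
            ((j : ℤ) + 1) * eulerianT 2 (p + 1) (j : ℤ) * ((n + j).choose (2 * p + 3) : ℤ) +
            (2 * (p : ℤ) + 2 - j) * eulerianT 2 (p + 1) (j : ℤ) *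
              ((n + j + 1).choose (2 * p + 3) : ℤ) =
            (n : ℤ) * (eulerianT 2 (p + 1) (j : ℤ) * ((n + j).choose (2 * (p + 1)) : ℤ)) := by
          intro j hj
          have hkey := key_binom (n + j) j (2 * p + 3) (by omega)
          rw [show 2 * p + 3 - 1 = 2 * (p + 1) by omega] at hkey
          push_cast at hkey ⊢
          linear_combination eulerianT 2 (p + 1) (j : ℤ) * hkey
        have main :
            ∑ j ∈ Finset.range (p + 2),
              eulerianT 2 (p + 2) (j : ℤ) * ((n + j).choose (2 * p + 3) : ℤ) =
            (n : ℤ) * ∑ j ∈ Finset.range (p + 1),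
              eulerianT 2 (p + 1) (j : ℤ) * ((n + j).choose (2 * (p + 1)) : ℤ) := by
          rw [Finset.sum_congr rfl hrec, Finset.sum_add_distrib, hA, hB,
            ← Finset.sum_add_distrib, Finset.sum_congr rfl hterm, ← Finset.mul_sum]
        rw [main]

theorem stirlingFirst_eq_sum_eulerianT2 (n k : ℕ) (hk : 1 ≤ k) :
    (stirlingFirst n ((n : ℤ) - k) : ℤ) =
      ∑ i ∈ Finset.Icc (k + 1) n,
        eulerianT 2 k (2 * (k : ℤ) - i) * ((2 * k + n - i).choose (2 * k) : ℤ) := by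
  rw [auxA n k hk]
  -- reindex: j ↦ i = 2k - j
  have step1 :
      ∑ j ∈ Finset.range k, eulerianT 2 k (j : ℤ) * (((n + j).choose (2 * k) : ℕ) : ℤ) =
      ∑ i ∈ Finset.Icc (k + 1) (2 * k),
        eulerianT 2 k (2 * (k : ℤ) - i) * (((n + (2 * k - i)).choose (2 * k) : ℕ) : ℤ) := by
    refine Finset.sum_nbij' (fun j => 2 * k - j) (fun i => 2 * k - i) ?_ ?_ ?_ ?_ ?_
    · intro a ha; simp only [Finset.mem_range] at ha; simp only [Finset.mem_Icc]; omega
    · intro a ha; simp only [Finset.mem_Icc] at ha; simp only [Finset.mem_range]; omega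
    · intro a ha; simp only [Finset.mem_range] at ha
      show 2 * k - (2 * k - a) = a; omega
    · intro a ha; simp only [Finset.mem_Icc] at ha
      show 2 * k - (2 * k - a) = a; omega
    · intro a ha
      simp only [Finset.mem_range] at ha
      show eulerianT 2 k (a : ℤ) * (((n + a).choose (2 * k) : ℕ) : ℤ) =
        eulerianT 2 k (2 * (k : ℤ) - ((2 * k - a : ℕ) : ℤ)) *
          (((n + (2 * k - (2 * k - a))).choose (2 * k) : ℕ) : ℤ)
      have h1 : (2 * (k : ℤ) - ((2 * k - a : ℕ) : ℤ)) = (a : ℤ) := by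
        push_cast [Nat.cast_sub (by omega : a ≤ 2 * k)]; ring
      have h2 : 2 * k - (2 * k - a) = a := by omega
      rw [h1, h2]
  rw [step1]
  set S := Finset.Icc (k + 1) (2 * k) with hS
  set T := Finset.Icc (k + 1) n with hT
  have step2 :
      ∑ i ∈ S, eulerianT 2 k (2 * (k : ℤ) - i) * (((n + (2 * k - i)).choose (2 * k) : ℕ) : ℤ) =
      ∑ i ∈ S ∩ T,
        eulerianT 2 k (2 * (k : ℤ) - i) * (((n + (2 * k - i)).choose (2 * k) : ℕ) : ℤ) := by
    refine (Finset.sum_subset Finset.inter_subset_left fun x hx hnx => ?_).symm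
    simp only [hS, hT, Finset.mem_Icc, Finset.mem_inter] at hx hnx
    rw [Nat.choose_eq_zero_of_lt (by omega)]
    simp
  have step3 :
      ∑ i ∈ S ∩ T,
        eulerianT 2 k (2 * (k : ℤ) - i) * (((n + (2 * k - i)).choose (2 * k) : ℕ) : ℤ) =
      ∑ i ∈ S ∩ T,
        eulerianT 2 k (2 * (k : ℤ) - i) * (((2 * k + n - i).choose (2 * k) : ℕ) : ℤ) := by
    refine Finset.sum_congr rfl fun x hx => ?_
    simp only [hS, hT, Finset.mem_Icc, Finset.mem_inter] at hx
    rw [show n + (2 * k - x) = 2 * k + n - x by omega]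
  have step4 :
      ∑ i ∈ S ∩ T,
        eulerianT 2 k (2 * (k : ℤ) - i) * (((2 * k + n - i).choose (2 * k) : ℕ) : ℤ) =
      ∑ i ∈ T,
        eulerianT 2 k (2 * (k : ℤ) - i) * (((2 * k + n - i).choose (2 * k) : ℕ) : ℤ) := by
    refine Finset.sum_subset Finset.inter_subset_right fun x hx hnx => ?_
    simp only [hS, hT, Finset.mem_Icc, Finset.mem_inter] at hx hnx
    rw [eulerianT2_neg k _ (by push_cast; omega)]
    simp
  rw [step2, step3, step4]
end

section
/- Explicit formula for classical Eulerian numbers: for n ≥ 1 and 0 ≤ k ≤ n-1, T^(1)_{n,k} = Σ 1^{t_1}·2^{t_2}···(k+1)^{t_{k+1}} · (t_1+1)(t_1+t_2+1)···(t_1+···+t_k+1), summed over nonnegative integers t_1,...,t_{k+1} with t_1+···+t_{k+1} = n-k-1. -/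
open Finset in
/-- The weight of a tuple in the explicit formula. -/
def eulW (k : ℕ) (t : Fin (k + 1) → ℕ) : ℕ :=
  (∏ j : Fin (k + 1), ((j : ℕ) + 1) ^ t j) *
    ∏ j ∈ Finset.range k,
      ((∑ i ∈ Finset.univ.filter fun i : Fin (k + 1) => (i : ℕ) ≤ j, t i) + 1)

/-- The explicit sum. -/
def eulF (k m : ℕ) : ℕ :=
  ∑ t ∈ Finset.Nat.antidiagonalTuple (k + 1) m, eulW k t

lemma eulF_zero_left (m : ℕ) : eulF 0 m = 1 := by
  simp [eulF, eulW, Finset.Nat.antidiagonalTuple_one]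

lemma eulF_zero_right (k : ℕ) : eulF k 0 = 1 := by
  simp [eulF, eulW, Finset.Nat.antidiagonalTuple_zero_right]

lemma eulW_snoc (k m : ℕ) (t' : Fin (k + 1) → ℕ) (h : ∑ i, t' i = m + 1) :
    eulW (k + 1) (Fin.snoc t' 0) = (m + 2) * eulW k t' := by
  have hS : ∀ j : ℕ,
      (∑ i ∈ Finset.univ.filter fun i : Fin (k + 2) => (i : ℕ) ≤ j, Fin.snoc t' 0 i)
        = ∑ i ∈ Finset.univ.filter fun i : Fin (k + 1) => (i : ℕ) ≤ j, t' i := by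
    intro j
    rw [Finset.sum_filter, Finset.sum_filter, Fin.sum_univ_castSucc]
    simp
  have hfull : (Finset.univ.filter fun i : Fin (k + 1) => (i : ℕ) ≤ k) = Finset.univ := by
    apply Finset.filter_true_of_mem
    intro i _
    exact Nat.lt_succ_iff.mp i.isLt
  unfold eulW
  rw [Fin.prod_univ_castSucc, Finset.prod_range_succ]
  simp only [Fin.snoc_castSucc, Fin.snoc_last, Fin.val_last, pow_zero, mul_one, hS, hfull, h,
    Fin.coe_castSucc]
  ring

lemma eulW_update (k : ℕ) (t : Fin (k + 2) → ℕ) (h : t (Fin.last (k + 1)) ≠ 0) :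
    eulW (k + 1) t =
      (k + 2) * eulW (k + 1) (Function.update t (Fin.last (k + 1)) (t (Fin.last (k + 1)) - 1)) := by
  set u := Function.update t (Fin.last (k + 1)) (t (Fin.last (k + 1)) - 1) with hu
  have hcs : ∀ j : Fin (k + 1), u (Fin.castSucc j) = t (Fin.castSucc j) := by
    intro j
    exact Function.update_of_ne (Fin.ne_of_lt (Fin.castSucc_lt_last j)) _ _
  have hS : ∀ j ∈ Finset.range (k + 1),
      (∑ i ∈ Finset.univ.filter fun i : Fin (k + 2) => (i : ℕ) ≤ j, u i)
        = ∑ i ∈ Finset.univ.filter fun i : Fin (k + 2) => (i : ℕ) ≤ j, t i := by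
    intro j hj
    apply Finset.sum_congr rfl
    intro i hi
    simp only [Finset.mem_filter, Finset.mem_univ, true_and] at hi
    have hj' : j < k + 1 := Finset.mem_range.mp hj
    have : i ≠ Fin.last (k + 1) := by
      intro hcon
      rw [hcon] at hi
      simp only [Fin.val_last] at hi
      omega
    exact Function.update_of_ne this _ _
  have hlast : u (Fin.last (k + 1)) = t (Fin.last (k + 1)) - 1 := by
    simp [hu]
  have hpow : ((Fin.last (k + 1) : ℕ) + 1) ^ t (Fin.last (k + 1))
      = (k + 2) * ((Fin.last (k + 1) : ℕ) + 1) ^ u (Fin.last (k + 1)) := by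
    rw [hlast]
    obtain ⟨a, ha⟩ : ∃ a, t (Fin.last (k + 1)) = a + 1 := ⟨t (Fin.last (k + 1)) - 1, by omega⟩
    rw [ha]
    simp only [Fin.val_last, Nat.add_sub_cancel, pow_succ]
    ring
  have hP : (∏ j ∈ Finset.range (k + 1),
        ((∑ i ∈ Finset.univ.filter fun i : Fin (k + 2) => (i : ℕ) ≤ j, u i) + 1))
      = ∏ j ∈ Finset.range (k + 1),
        ((∑ i ∈ Finset.univ.filter fun i : Fin (k + 2) => (i : ℕ) ≤ j, t i) + 1) :=
    Finset.prod_congr rfl fun j hj => by rw [hS j hj]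
  have hprod : (∏ j : Fin (k + 2), ((j : ℕ) + 1) ^ t j)
      = (k + 2) * ∏ j : Fin (k + 2), ((j : ℕ) + 1) ^ u j := by
    rw [Fin.prod_univ_castSucc, Fin.prod_univ_castSucc (f := fun j : Fin (k + 2) => ((j : ℕ) + 1) ^ u j)]
    simp only [hcs]
    rw [hpow]
    ring
  unfold eulW
  rw [hP, hprod]
  ring

lemma eulF_rec (k m : ℕ) :
    eulF (k + 1) (m + 1) = (k + 2) * eulF (k + 1) m + (m + 2) * eulF k (m + 1) := by
  classical
  have e1 : eulF (k + 1) (m + 1)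
      = ∑ t ∈ Finset.Nat.antidiagonalTuple (k + 2) (m + 1), eulW (k + 1) t := rfl
  have e2 : eulF (k + 1) m
      = ∑ t ∈ Finset.Nat.antidiagonalTuple (k + 2) m, eulW (k + 1) t := rfl
  rw [e1, ← Finset.sum_filter_add_sum_filter_not
    (Finset.Nat.antidiagonalTuple (k + 2) (m + 1)) (fun t => t (Fin.last (k + 1)) = 0)]
  have hA : (∑ t ∈ (Finset.Nat.antidiagonalTuple (k + 2) (m + 1)).filter
        (fun t => t (Fin.last (k + 1)) = 0), eulW (k + 1) t)
      = (m + 2) * eulF k (m + 1) := by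
    rw [eulF, Finset.mul_sum]
    refine Finset.sum_nbij' (fun t => Fin.init t) (fun t' => Fin.snoc t' 0) ?_ ?_ ?_ ?_ ?_
    · intro t ht
      simp only [Finset.mem_filter, Finset.Nat.mem_antidiagonalTuple] at ht
      rw [Finset.Nat.mem_antidiagonalTuple]
      have := ht.1
      rw [Fin.sum_univ_castSucc, ht.2] at this
      simpa [Fin.init] using this
    · intro t' ht'
      rw [Finset.Nat.mem_antidiagonalTuple] at ht'
      simp only [Finset.mem_filter, Finset.Nat.mem_antidiagonalTuple]
      constructor
      · rw [Fin.sum_univ_castSucc]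
        simpa using ht'
      · simp
    · intro t ht
      simp only [Finset.mem_filter] at ht
      rw [← ht.2]
      exact Fin.snoc_init_self t
    · intro t' _
      funext j
      simp [Fin.init]
    · intro t ht
      simp only [Finset.mem_filter, Finset.Nat.mem_antidiagonalTuple] at ht
      have hsum : ∑ i, Fin.init t i = m + 1 := by
        have := ht.1
        rw [Fin.sum_univ_castSucc, ht.2] at this
        simpa [Fin.init] using this
      have hw := eulW_snoc k m (Fin.init t) hsum
      have heq : (Fin.snoc (Fin.init t) 0 : Fin (k + 2) → ℕ) = t := by
        rw [← ht.2]
        exact Fin.snoc_init_self t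
      rw [heq] at hw
      exact hw
  have hB : (∑ t ∈ (Finset.Nat.antidiagonalTuple (k + 2) (m + 1)).filter
        (fun t => ¬t (Fin.last (k + 1)) = 0), eulW (k + 1) t)
      = (k + 2) * eulF (k + 1) m := by
    rw [e2, Finset.mul_sum]
    refine Finset.sum_nbij'
      (fun t => Function.update t (Fin.last (k + 1)) (t (Fin.last (k + 1)) - 1))
      (fun u => Function.update u (Fin.last (k + 1)) (u (Fin.last (k + 1)) + 1)) ?_ ?_ ?_ ?_ ?_
    · intro t ht
      simp only [Finset.mem_filter, Finset.Nat.mem_antidiagonalTuple] at ht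
      rw [Finset.Nat.mem_antidiagonalTuple]
      rw [Finset.sum_update_of_mem (Finset.mem_univ _)]
      have h4 := Finset.add_sum_erase Finset.univ t (Finset.mem_univ (Fin.last (k + 1)))
      rw [ht.1] at h4
      rw [Finset.sdiff_singleton_eq_erase]
      clear hA e1 e2
      omega
    · intro u hu
      rw [Finset.Nat.mem_antidiagonalTuple] at hu
      simp only [Finset.mem_filter, Finset.Nat.mem_antidiagonalTuple]
      constructor
      · rw [Finset.sum_update_of_mem (Finset.mem_univ _)]
        have h4 := Finset.add_sum_erase Finset.univ u (Finset.mem_univ (Fin.last (k + 1)))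
        rw [hu] at h4
        rw [Finset.sdiff_singleton_eq_erase]
        clear hA e1 e2
        omega
      · simp
    · intro t ht
      simp only [Finset.mem_filter] at ht
      funext i
      by_cases hi : i = Fin.last (k + 1)
      · subst hi
        simp only [Function.update_self]
        clear hA e1 e2
        omega
      · simp [Function.update_of_ne hi]
    · intro u _
      funext i
      by_cases hi : i = Fin.last (k + 1)
      · subst hi
        simp only [Function.update_self]
        clear hA e1 e2
        omega
      · simp [Function.update_of_ne hi]
    · intro t ht
      simp only [Finset.mem_filter] at ht
      exact eulW_update k t ht.2
  rw [hA, hB]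
  ring

lemma eulerianT1_key (n : ℕ) : ∀ k : ℕ, k ≤ n → eulerianT 1 (n + 1) (k : ℤ) = (eulF k (n - k) : ℤ) := by
  induction n with
  | zero =>
    intro k hk
    interval_cases k
    simp [eulerianT, eulF_zero_left]
  | succ n ih =>
    intro k hk
    have hexp : eulerianT 1 (n + 2) (k : ℤ)
        = ((k : ℤ) + 1) * eulerianT 1 (n + 1) (k : ℤ)
          + ((n : ℤ) + 2 - k) * eulerianT 1 (n + 1) ((k : ℤ) - 1) := by
      simp only [eulerianT]
      rw [if_neg]
      · push_cast
        ring_nf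
      · omega
    match k with
    | 0 =>
      rw [hexp]
      have h0 : eulerianT 1 (n + 1) ((0 : ℕ) : ℤ) = (eulF 0 (n - 0) : ℤ) := ih 0 (Nat.zero_le n)
      have hneg : eulerianT 1 (n + 1) (((0 : ℕ) : ℤ) - 1) = 0 :=
        eulerianT_neg 1 (n + 1) _ (by norm_num)
      rw [h0, hneg, eulF_zero_left]
      norm_num [eulF_zero_left]
    | j + 1 =>
      have hcast : ((j + 1 : ℕ) : ℤ) - 1 = ((j : ℕ) : ℤ) := by push_cast; ring
      rw [hexp, hcast]
      by_cases hj : j + 1 ≤ n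
      · rw [ih (j + 1) hj, ih j (by omega)]
        have h1 : n - (j + 1) = (n - j - 1) := by omega
        have h2 : n - j = (n - j - 1) + 1 := by omega
        have h3 : n + 1 - (j + 1) = (n - j - 1) + 1 := by omega
        rw [h1, h2, h3, eulF_rec j (n - j - 1)]
        push_cast
        have hco : (n : ℤ) + 2 - (((j : ℕ) : ℤ) + 1) = ((n - j - 1 : ℕ) : ℤ) + 2 := by
          omega
        rw [hco]
        ring
      · have hjn : j = n := by omega
        rw [hjn]
        rw [eulerianT_ge 1 (n + 1) ((n + 1 : ℕ) : ℤ) (by push_cast; omega)]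
        rw [ih n le_rfl]
        have h1 : n - n = 0 := by omega
        have h2 : n + 1 - (n + 1) = 0 := by omega
        rw [h1, h2, eulF_zero_right, eulF_zero_right]
        push_cast
        ring

theorem eulerianT1_explicit (n k : ℕ) (hn : 1 ≤ n) (hk : k ≤ n - 1) :
    eulerianT 1 n (k : ℤ) =
      ∑ t ∈ Finset.Nat.antidiagonalTuple (k + 1) (n - k - 1),
        ((∏ j : Fin (k + 1), ((j : ℕ) + 1) ^ t j : ℕ) : ℤ) *
          ∏ j ∈ Finset.range k,
            (((∑ i ∈ Finset.univ.filter fun i : Fin (k + 1) => (i : ℕ) ≤ j, t i) + 1 : ℕ) : ℤ) := by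
  obtain ⟨n', rfl⟩ : ∃ n', n = n' + 1 := ⟨n - 1, by omega⟩
  have hk' : k ≤ n' := by omega
  have hkey := eulerianT1_key n' k hk'
  have hsub : n' + 1 - k - 1 = n' - k := by omega
  rw [hsub, hkey, eulF]
  push_cast [eulW]
  rfl
end

section
/- For m ≥ 2 and n ≥ 1, the row sum of the (m-1)-th order Eulerian triangle equals the last entry of the n-th row of the m-th order Eulerian triangle: Σ_{k=0}^{n-1} T^(m-1)_{n,k} = T^(m)_{n,n-1}. -/
lemma eulerianT_of_le (m n : ℕ) (k : ℤ) (h : (n : ℤ) ≤ k) : eulerianT m n k = 0 := by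
  match n with
  | 0 => rfl
  | 1 =>
    have : k ≠ 0 := by omega
    simp [eulerianT, this]
  | n + 2 =>
    rw [eulerianT, if_pos]
    right
    push_cast at h ⊢
    linarith

lemma eulerianT_of_neg (m n : ℕ) (k : ℤ) (h : k < 0) : eulerianT m n k = 0 := by
  match n with
  | 0 => rfl
  | 1 =>
    have : k ≠ 0 := by omega
    simp [eulerianT, this]
  | n + 2 =>
    rw [eulerianT, if_pos]
    left; exact h

theorem rowSum_eq_last (m n : ℕ) (hm : 2 ≤ m) (hn : 1 ≤ n) :
    ∑ k ∈ Finset.range n, eulerianT (m - 1) n (k : ℤ) = eulerianT m n ((n : ℤ) - 1) := by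
  have hm1 : ((m - 1 : ℕ) : ℤ) = (m : ℤ) - 1 := by
    have := Nat.cast_sub (by omega : 1 ≤ m) (R := ℤ)
    simpa using this
  induction n, hn using Nat.le_induction with
  | base => simp [eulerianT]
  | succ n hn ih =>
    obtain ⟨p, rfl⟩ : ∃ p, n = p + 1 := ⟨n - 1, by omega⟩
    -- RHS
    have hR : eulerianT m (p + 1 + 1) ((p : ℤ) + 1 + 1 - 1)
        = ((m : ℤ) * ((p : ℤ) + 1) + 1 - ((p : ℤ) + 1)) * eulerianT m (p + 1) ((p : ℤ) + 1 - 1) := by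
      rw [show ((p : ℤ) + 1 + 1 - 1) = (p : ℤ) + 1 by ring, eulerianT, if_neg (by omega)]
      rw [eulerianT_of_le m (p + 1) ((p : ℤ) + 1) (by push_cast; omega)]
      ring
    push_cast
    rw [hR]
    -- LHS
    have hL : ∀ k ∈ Finset.range (p + 2), eulerianT (m - 1) (p + 2) (k : ℤ)
        = ((k : ℤ) + 1) * eulerianT (m - 1) (p + 1) (k : ℤ) +
          (((m : ℤ) - 1) * ((p : ℤ) + 2) - (k : ℤ) - ((m : ℤ) - 1) + 1) *
            eulerianT (m - 1) (p + 1) ((k : ℤ) - 1) := by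
      intro k hk
      simp only [Finset.mem_range] at hk
      rw [eulerianT, if_neg (by push_cast; omega), hm1]
    rw [show p + 1 + 1 = p + 2 from rfl, Finset.sum_congr rfl hL, Finset.sum_add_distrib]
    rw [Finset.sum_range_succ (fun k => ((k : ℤ) + 1) * eulerianT (m - 1) (p + 1) (k : ℤ))]
    rw [eulerianT_of_le (m - 1) (p + 1) ((p + 1 : ℕ) : ℤ) (by push_cast; omega)]
    rw [Finset.sum_range_succ' (fun k => (((m : ℤ) - 1) * ((p : ℤ) + 2) - (k : ℤ) - ((m : ℤ) - 1) + 1) *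
            eulerianT (m - 1) (p + 1) ((k : ℤ) - 1))]
    rw [show ((0 : ℕ) : ℤ) - 1 = -1 by norm_num, eulerianT_of_neg (m - 1) (p + 1) (-1) (by norm_num)]
    simp only [mul_zero, add_zero, zero_mul]
    have : ∀ k ∈ Finset.range (p + 1),
        ((k : ℤ) + 1) * eulerianT (m - 1) (p + 1) (k : ℤ) +
          (((m : ℤ) - 1) * ((p : ℤ) + 2) - ((k + 1 : ℕ) : ℤ) - ((m : ℤ) - 1) + 1) *
            eulerianT (m - 1) (p + 1) (((k + 1 : ℕ) : ℤ) - 1)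
        = ((m : ℤ) * ((p : ℤ) + 1) + 1 - ((p : ℤ) + 1)) * eulerianT (m - 1) (p + 1) (k : ℤ) := by
      intro k hk
      push_cast
      rw [show (k : ℤ) + 1 - 1 = (k : ℤ) by ring]
      ring
    rw [← Finset.sum_add_distrib, Finset.sum_congr rfl this, ← Finset.mul_sum, ih]
    push_cast
    ring
end
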